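/- Let d ≥ 2 and k ≥ 1 be integers, let G be a finite graph with maximum degree at most d, and let v be a vertex of G. Then the number of vertex sets K ⊆ V(G) with v ∈ K, |K| ≤ k, and K inducing a connected subgraph of G, is at most d^{2k}. -/

import Mathlib

open scoped Classical

noncomputable section

/-- A finite simple graph, with vertex set `Fin n`. -/
structure FinGraph where
  n : ℕ
  adj : SimpleGraph (Fin n)

namespace FinGraph

/-- `G` has all vertex degrees at most `d`. -/
def DegreeBound (G : FinGraph) (d : ℕ) : Prop :=
  ∀ v : Fin G.n, (G.adj.neighborSet v).ncard ≤ d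

/-- `G` is `(δ,k)`-hyper-finite: one can delete a set `S` of at most `δ·|V(G)|` edges
so that all connected components of the remaining graph have at most `k` vertices. -/
def HyperFinite (G : FinGraph) (δ : ℝ) (k : ℕ) : Prop :=
  ∃ S ⊆ G.adj.edgeSet, (S.ncard : ℝ) ≤ δ * G.n ∧
    ∀ v : Fin G.n, (((G.adj.deleteEdges S).connectedComponentMk v).supp).ncard ≤ k

/-- The ball of radius `r` around `v` in `G`: all vertices at graph distance at most `r`. -/
def ball (G : FinGraph) (v : Fin G.n) (r : ℕ) : Set (Fin G.n) :=
  {u | ∃ p : G.adj.Walk v u, p.length ≤ r}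

lemma mem_ball_self (G : FinGraph) (v : Fin G.n) (r : ℕ) : v ∈ G.ball v r :=
  ⟨SimpleGraph.Walk.nil, by simp⟩

end FinGraph

/-- A rooted finite graph. -/
structure RootedGraph where
  n : ℕ
  adj : SimpleGraph (Fin n)
  root : Fin n

/-- Rooted isomorphism: a graph isomorphism mapping root to root. -/
def RootedGraph.RIso (H K : RootedGraph) : Prop :=
  ∃ φ : H.adj ≃g K.adj, φ H.root = K.root

instance rootedSetoid : Setoid RootedGraph where
  r := RootedGraph.RIso
  iseqv := by
    constructor
    · intro H; exact ⟨RelIso.refl _, rfl⟩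
    · rintro H K ⟨φ, hφ⟩
      refine ⟨φ.symm, ?_⟩
      rw [← hφ]
      exact φ.symm_apply_apply H.root
    · rintro H K L ⟨φ, hφ⟩ ⟨ψ, hψ⟩
      exact ⟨φ.trans ψ, by rw [RelIso.trans_apply, hφ, hψ]⟩

/-- Isomorphism types of rooted finite graphs. -/
def RootedIsoClass := Quotient rootedSetoid

/-- The isomorphism type of the rooted ball `(B_G(v,r), v)`. -/
noncomputable def FinGraph.ballType (G : FinGraph) (v : Fin G.n) (r : ℕ) : RootedIsoClass :=
  letI : Fintype (G.ball v r) := Fintype.ofFinite _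
  let e := Fintype.equivFin (G.ball v r)
  Quotient.mk rootedSetoid
    ⟨Fintype.card (G.ball v r),
     SimpleGraph.comap (⇑e.symm) (G.adj.induce (G.ball v r)),
     e ⟨v, G.mem_ball_self v r⟩⟩

/-- `μ_r^G(H)`: the fraction of vertices of `G` whose rooted `r`-ball has isomorphism type `H`. -/
noncomputable def mu (G : FinGraph) (r : ℕ) (H : RootedIsoClass) : ℝ :=
  ({v : Fin G.n | G.ballType v r = H}.ncard : ℝ) / G.n

/-- `ρ_r(G,G') = Σ_H |μ_r^G(H) - μ_r^{G'}(H)|`, summed over all isomorphism types of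
rooted graphs (only finitely many summands are nonzero). -/
noncomputable def rho (r : ℕ) (G G' : FinGraph) : ℝ :=
  ∑' H : RootedIsoClass, |mu G r H - mu G' r H|

/-- Isomorphism of (unrooted) finite graphs. -/
def FinGraph.Iso (G G' : FinGraph) : Prop := Nonempty (G.adj ≃g G'.adj)

/-- `H` occurs as a subgraph of `G`. -/
def FinGraph.IsSubgraphOf (H G : FinGraph) : Prop :=
  ∃ f : Fin H.n ↪ Fin G.n, ∀ u v, H.adj.Adj u v → G.adj.Adj (f u) (f v)

/-- `G` is `ε`-far (with respect to degree bound `d`) from the graph property `P`: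
every graph on the vertex set of `G` satisfying `P` differs from `G` in at least
`ε·d·|V(G)|` edges. -/
def FarFrom (G : FinGraph) (d : ℕ) (ε : ℝ) (P : Set FinGraph) : Prop :=
  ∀ H : SimpleGraph (Fin G.n), (⟨G.n, H⟩ : FinGraph) ∈ P →
    ε * d * G.n ≤ ((symmDiff G.adj.edgeSet H.edgeSet).ncard : ℝ)

/-- `H` is a minor of `G` (branch-set definition: equivalent, for simple graphs, to
obtaining `H` from `G` by vertex deletions, edge deletions and edge contractions). -/
def SimpleGraph.HasMinor {V W : Type*} (G : SimpleGraph V) (H : SimpleGraph W) : Prop :=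
  ∃ B : W → Set V,
    (∀ u, (G.induce (B u)).Connected) ∧
    (∀ u u', u ≠ u' → Disjoint (B u) (B u')) ∧
    (∀ u u', H.Adj u u' → ∃ x ∈ B u, ∃ y ∈ B u', G.Adj x y)

/-- `H` is a minor of the finite graph `G`. -/
def FinGraph.HasMinor (G H : FinGraph) : Prop := SimpleGraph.HasMinor G.adj H.adj

/-- A graph property (class of graphs) closed under isomorphism. -/
def IsoClosed (P : Set FinGraph) : Prop :=
  ∀ G G' : FinGraph, FinGraph.Iso G G' → G ∈ P → G' ∈ P

/-- A monotone graph property: closed under taking subgraphs. -/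
def MonotoneProp (P : Set FinGraph) : Prop :=
  ∀ G ∈ P, ∀ H : FinGraph, H.IsSubgraphOf G → H ∈ P

/-- A minor-closed graph property. -/
def MinorClosed (P : Set FinGraph) : Prop :=
  ∀ G ∈ P, ∀ H : FinGraph, G.HasMinor H → H ∈ P

/-- A hyper-finite family of graphs. -/
def HyperFiniteFamily (A : Set FinGraph) : Prop :=
  ∀ δ : ℝ, 0 < δ → ∃ k : ℕ, 1 ≤ k ∧ ∀ G ∈ A, G.HyperFinite δ k

end

section AuxConnectedSetsBound
open SimpleGraph

/-- Lift a walk avoiding the complement of `s` to reachability in the induced graph. -/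
lemma reachable_induce_of_walk {V : Type} {H : SimpleGraph V} {s : Set V} :
    ∀ {a b : V} (p : H.Walk a b), (∀ x ∈ p.support, x ∈ s) →
    ∀ (ha : a ∈ s) (hb : b ∈ s), (H.induce s).Reachable ⟨a, ha⟩ ⟨b, hb⟩ := by
  intro a b p
  induction p with
  | nil => intro _ ha hb; exact Reachable.refl _
  | cons h p ih =>
    rename_i u c w
    intro hp ha hb
    have hc : c ∈ s := hp c (by simp [Walk.support_cons])
    have hadj : (H.induce s).Adj ⟨u, ha⟩ ⟨c, hc⟩ := by
      simp only [comap_adj, Function.Embedding.coe_subtype]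
      exact h
    exact hadj.reachable.trans (ih (fun x hx => hp x (by simp [Walk.support_cons, hx])) hc hb)

/-- A connected graph on a finite vertex type has a closed walk from any vertex
covering all vertices, of length at most `2*(card - 1)`. -/
lemma cover_walk : ∀ (n : ℕ) (V : Type) (_ : Fintype V) (H : SimpleGraph V),
    Fintype.card V = n → H.Connected → ∀ v : V,
    ∃ w : H.Walk v v, (∀ x : V, x ∈ w.support) ∧ w.length ≤ 2 * (n - 1) := by
  intro n
  induction n using Nat.strong_induction_on with
  | _ n ih =>
  intro V _ H hcard hconn v
  rcases le_or_gt n 1 with h1 | h1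
  · refine ⟨Walk.nil, ?_, by simp⟩
    intro x
    have hx : x = v := Fintype.card_le_one_iff.mp (hcard ▸ h1) x v
    simp [hx]
  · -- pick u at maximal distance from v
    obtain ⟨u, -, hu⟩ := Finset.exists_max_image Finset.univ (H.dist v) ⟨v, Finset.mem_univ v⟩
    have hu' : ∀ x : V, H.dist v x ≤ H.dist v u := fun x => hu x (Finset.mem_univ x)
    obtain ⟨x₀, hx₀⟩ := Fintype.exists_ne_of_one_lt_card (hcard ▸ h1) v
    have hdpos : 0 < H.dist v u :=
      lt_of_lt_of_le (hconn.pos_dist_of_ne (Ne.symm hx₀)) (hu' x₀)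
    have huv : u ≠ v := by
      intro h; rw [h, SimpleGraph.dist_self] at hdpos; exact lt_irrefl 0 hdpos
    -- every other vertex has a walk from v avoiding u
    have key : ∀ x : V, x ≠ u → ∃ p : H.Walk v x, u ∉ p.support := by
      intro x hx
      obtain ⟨p, hp⟩ := hconn.exists_walk_length_eq_dist v x
      refine ⟨p, fun hmem => ?_⟩
      have hA : H.dist v u ≤ (p.takeUntil u hmem).length := dist_le _
      have hB : (p.dropUntil u hmem).length ≠ 0 := fun h0 => hx (Walk.eq_of_length_eq_zero h0).symm
      have hC := congrArg Walk.length (p.take_spec hmem)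
      rw [Walk.length_append] at hC
      have hD := hu' x
      omega
    -- the induced graph on the complement of u is connected
    have hv' : v ∈ ({u}ᶜ : Set V) := by simpa using Ne.symm huv
    have hpre : ∀ (x : V) (hx : x ∈ ({u}ᶜ : Set V)),
        (H.induce ({u}ᶜ : Set V)).Reachable ⟨v, hv'⟩ ⟨x, hx⟩ := by
      intro x hx
      obtain ⟨p, hp⟩ := key x (by simpa using hx)
      exact reachable_induce_of_walk p
        (fun y hy => by simp only [Set.mem_compl_iff, Set.mem_singleton_iff];
                        rintro rfl; exact hp hy) hv' hx
    have hconn' : (H.induce ({u}ᶜ : Set V)).Connected := by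
      haveI : Nonempty ({u}ᶜ : Set V) := ⟨⟨v, hv'⟩⟩
      refine ⟨fun a b => ?_⟩
      obtain ⟨a, ha⟩ := a; obtain ⟨b, hb⟩ := b
      exact (hpre a ha).symm.trans (hpre b hb)
    have hcard' : Fintype.card ({u}ᶜ : Set V) = n - 1 := by
      rw [Fintype.card_compl_set, Set.card_singleton, hcard]
    obtain ⟨w', hw'cov, hw'len⟩ :=
      ih (n - 1) (by omega) ({u}ᶜ : Set V) inferInstance _ hcard' hconn' ⟨v, hv'⟩
    -- map back into H
    let f := SimpleGraph.Embedding.induce ({u}ᶜ : Set V) (G := H)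
    let w'' : H.Walk v v := w'.map f.toHom
    have hw''cov : ∀ x : V, x ≠ u → x ∈ w''.support := by
      intro x hx
      have := hw'cov ⟨x, by simpa using hx⟩
      show x ∈ (w'.map f.toHom).support
      simp only [w'', Walk.support_map, List.mem_map]
      exact ⟨⟨x, by simpa using hx⟩, this, rfl⟩
    have hw''len : w''.length ≤ 2 * (n - 2) := by
      have : w''.length = w'.length := Walk.length_map _ _
      omega
    -- find a neighbor y of u
    obtain ⟨q⟩ := hconn u v
    cases q with
    | nil => exact absurd rfl huv
    | cons hadj q' =>
      rename_i y
      have hy : y ∈ w''.support := hw''cov y hadj.ne'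
      refine ⟨(w''.takeUntil y hy).append
        ((Walk.cons hadj.symm (Walk.cons hadj Walk.nil)).append (w''.dropUntil y hy)), ?_, ?_⟩
      · intro x
        by_cases hx : x = u
        · subst hx
          simp [Walk.mem_support_append_iff, Walk.support_cons]
        · have hx' : x ∈ w''.support := hw''cov x hx
          rw [← w''.take_spec hy, Walk.mem_support_append_iff] at hx'
          rw [Walk.mem_support_append_iff, Walk.mem_support_append_iff]
          tauto
      · have hC := congrArg Walk.length (w''.take_spec hy)
        rw [Walk.length_append] at hC
        simp only [Walk.length_append, Walk.length_cons, Walk.length_nil]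
        omega

/-- Encode a walk as a list of neighbor indices. -/
def codeWalk {V : Type} {H : SimpleGraph V} {d : ℕ}
    (ι : ∀ x : V, ↥(H.neighborSet x) → Fin d) :
    ∀ {a b : V}, H.Walk a b → List (Fin d)
  | _, _, .nil => []
  | a, _, .cons h p => ι a ⟨_, h⟩ :: codeWalk ι p

lemma codeWalk_length {V : Type} {H : SimpleGraph V} {d : ℕ}
    (ι : ∀ x : V, ↥(H.neighborSet x) → Fin d) {a b : V} (p : H.Walk a b) :
    (codeWalk ι p).length = p.length := by
  induction p with
  | nil => simp [codeWalk]
  | cons h p ih => simp [codeWalk, ih]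

lemma codeWalk_support_eq {V : Type} {H : SimpleGraph V} {d : ℕ}
    (ι : ∀ x : V, ↥(H.neighborSet x) → Fin d)
    (hι : ∀ x : V, Function.Injective (ι x)) {a b : V} (p : H.Walk a b) :
    ∀ {c : V} (q : H.Walk a c), codeWalk ι p = codeWalk ι q → p.support = q.support := by
  induction p with
  | nil =>
    intro c q h
    cases q with
    | nil => rfl
    | cons h' q' => simp [codeWalk] at h
  | cons hadj p ih =>
    rename_i u x w
    intro c q h
    cases q with
    | nil => simp [codeWalk] at h
    | cons hadj2 q' =>
      rename_i y
      simp only [codeWalk, List.cons.injEq] at h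
      obtain ⟨h1, h2⟩ := h
      have hxy : x = y := by
        have := hι u h1
        exact congrArg Subtype.val this
      subst hxy
      simp only [Walk.support_cons]
      exact congrArg (List.cons u) (ih q' h2)

lemma geom_sum_le {d : ℕ} (hd : 2 ≤ d) : ∀ m : ℕ, ∑ i ∈ Finset.range m, d ^ i ≤ d ^ m := by
  intro m
  induction m with
  | zero => simp
  | succ m ih =>
    rw [Finset.sum_range_succ, pow_succ]
    have : d ^ m * 2 ≤ d ^ m * d := Nat.mul_le_mul_left _ hd
    omega

lemma sigma_list_inj {α : Type} {m : ℕ} (l1 l2 : List α) (h1 : l1.length < m) (h2 : l2.length < m)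
    (h : (⟨⟨l1.length, h1⟩, fun j => l1.get j⟩ : Σ i : Fin m, (Fin i → α)) =
         ⟨⟨l2.length, h2⟩, fun j => l2.get j⟩) : l1 = l2 := by
  have hlen : l1.length = l2.length := by
    have := congrArg (fun p : (Σ i : Fin m, (Fin i → α)) => (p.1 : ℕ)) h
    simpa using this
  apply List.ext_get hlen
  intro n hn1 hn2
  have hsnd := (Sigma.mk.inj_iff.mp h).2
  have hfin : ∀ (a b : ℕ) (_ : a = b) (hn1 : n < a) (hn2 : n < b),
      HEq (⟨n, hn1⟩ : Fin a) (⟨n, hn2⟩ : Fin b) := by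
    intro a b hab _ _; subst hab; rfl
  exact congr_heq hsnd (hfin _ _ hlen hn1 hn2)


end AuxConnectedSetsBound

/-- In a graph `G` with maximum degree at most `d` (`d ≥ 2`), for any vertex `v` the number
of vertex sets `K ∋ v` with `|K| ≤ k` inducing a connected subgraph is at most `d^{2k}`. -/
theorem connected_sets_bound (d k : ℕ) (hd : 2 ≤ d) (hk : 1 ≤ k) (G : FinGraph)
    (hdeg : G.DegreeBound d) (v : Fin G.n) :
    {K : Set (Fin G.n) | v ∈ K ∧ K.ncard ≤ k ∧ (G.adj.induce K).Connected}.ncard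
      ≤ d ^ (2 * k) := by
  set S := {K : Set (Fin G.n) | v ∈ K ∧ K.ncard ≤ k ∧ (G.adj.induce K).Connected} with hS
  -- neighbor indexing
  have hι : ∀ x : Fin G.n, ∃ f : ↥(G.adj.neighborSet x) → Fin d, Function.Injective f := by
    intro x
    have hc : Fintype.card ↥(G.adj.neighborSet x) ≤ Fintype.card (Fin d) := by
      rw [← Nat.card_eq_fintype_card, Nat.card_coe_set_eq, Fintype.card_fin]
      exact hdeg x
    obtain ⟨f⟩ := Function.Embedding.nonempty_of_card_le hc
    exact ⟨f, f.injective⟩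
  choose ι hιinj using hι
  -- for each K in S there is a short closed covering walk
  have hwalk : ∀ K ∈ S, ∃ w : G.adj.Walk v v,
      {x | x ∈ w.support} = K ∧ w.length ≤ 2 * k - 2 := by
    rintro K ⟨hv, hkc, hconn⟩
    have hcardK : Fintype.card ↥K = K.ncard := by
      rw [← Nat.card_eq_fintype_card, Nat.card_coe_set_eq]
    have h1K : 1 ≤ K.ncard := (Set.ncard_pos (Set.toFinite K)).mpr ⟨v, hv⟩
    obtain ⟨w', hcov, hlen⟩ :=
      cover_walk (Fintype.card ↥K) ↥K inferInstance (G.adj.induce K) rfl hconn ⟨v, hv⟩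
    refine ⟨w'.map (SimpleGraph.Embedding.induce K).toHom, ?_, ?_⟩
    · ext x
      show x ∈ (w'.map (SimpleGraph.Embedding.induce K).toHom).support ↔ x ∈ K
      simp only [Set.mem_setOf_eq, SimpleGraph.Walk.support_map, List.mem_map]
      constructor
      · rintro ⟨⟨y, hy⟩, -, rfl⟩; exact hy
      · intro hx; exact ⟨⟨x, hx⟩, hcov _, rfl⟩
    · show (w'.map (SimpleGraph.Embedding.induce K).toHom).length ≤ 2 * k - 2
      rw [SimpleGraph.Walk.length_map]; omega
  choose w hwsupp hwlen using hwalk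
  -- encode each K as an element of a finite sigma type
  have hΦlen : ∀ (K : ↥S), (codeWalk ι (w K.1 K.2)).length < 2 * k - 1 := by
    intro K
    rw [codeWalk_length]
    have := hwlen K.1 K.2
    omega
  set Φ : ↥S → Σ i : Fin (2 * k - 1), (Fin i → Fin d) :=
    fun K => ⟨⟨(codeWalk ι (w K.1 K.2)).length, hΦlen K⟩,
      fun j => (codeWalk ι (w K.1 K.2)).get j⟩ with hΦ
  have hΦinj : Function.Injective Φ := by
    intro K1 K2 h
    have hlists : codeWalk ι (w K1.1 K1.2) = codeWalk ι (w K2.1 K2.2) :=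
      sigma_list_inj _ _ (hΦlen K1) (hΦlen K2) h
    have hsupp := codeWalk_support_eq ι hιinj (w K1.1 K1.2) (w K2.1 K2.2) hlists
    apply Subtype.ext
    rw [← hwsupp K1.1 K1.2, ← hwsupp K2.1 K2.2, hsupp]
  have hcount : S.ncard ≤ Nat.card (Σ i : Fin (2 * k - 1), (Fin i → Fin d)) := by
    rw [← Nat.card_coe_set_eq]
    exact Nat.card_le_card_of_injective Φ hΦinj
  refine le_trans hcount ?_
  rw [Nat.card_eq_fintype_card, Fintype.card_sigma]
  have : ∀ i : Fin (2 * k - 1), Fintype.card (Fin (i : ℕ) → Fin d) = d ^ (i : ℕ) := by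
    intro i; simp [Fintype.card_fun]
  calc (∑ i : Fin (2 * k - 1), Fintype.card (Fin (i : ℕ) → Fin d))
      = ∑ i : Fin (2 * k - 1), d ^ (i : ℕ) := by simp [this]
    _ = ∑ i ∈ Finset.range (2 * k - 1), d ^ i := Fin.sum_univ_eq_sum_range _ _
    _ ≤ d ^ (2 * k - 1) := geom_sum_le hd _
    _ ≤ d ^ (2 * k) := Nat.pow_le_pow_right (by omega) (by omega)
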